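/- Define f₂(τ) = -τ/24 - (1/π)·Σ_{n=0}^∞ log(1 - e^{-π(2n+1)τ}) for τ > 0. Then f₂ is strictly decreasing, f₂(τ) → +∞ as τ → 0⁺, and f₂(τ) → -∞ as τ → +∞; in particular there exists a unique τ₀ > 0 with f₂(τ₀) = 0. -/

import Mathlib

open Real Filter Set

noncomputable def fTwo (τ : ℝ) : ℝ :=
  -τ / 24 - (1 / Real.pi) * ∑' n : ℕ, Real.log (1 - Real.exp (-Real.pi * (2 * (n : ℝ) + 1) * τ))

namespace FTwoAux

lemma expo_neg {τ : ℝ} (hτ : 0 < τ) (n : ℕ) : -Real.pi * (2 * (n : ℝ) + 1) * τ < 0 := by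
  have hpi := Real.pi_pos
  have h1 : (0:ℝ) < 2 * (n : ℝ) + 1 := by positivity
  nlinarith [mul_pos (mul_pos hpi h1) hτ]

lemma E_lt_one {τ : ℝ} (hτ : 0 < τ) (n : ℕ) :
    Real.exp (-Real.pi * (2 * (n : ℝ) + 1) * τ) < 1 :=
  Real.exp_lt_one_iff.2 (expo_neg hτ n)

lemma one_sub_E_pos {τ : ℝ} (hτ : 0 < τ) (n : ℕ) :
    0 < 1 - Real.exp (-Real.pi * (2 * (n : ℝ) + 1) * τ) :=
  sub_pos.2 (E_lt_one hτ n)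

lemma L_neg {τ : ℝ} (hτ : 0 < τ) (n : ℕ) :
    Real.log (1 - Real.exp (-Real.pi * (2 * (n : ℝ) + 1) * τ)) < 0 :=
  Real.log_neg (one_sub_E_pos hτ n) (by linarith [Real.exp_pos (-Real.pi * (2 * (n : ℝ) + 1) * τ)])

lemma neg_log_one_sub_le {x : ℝ} (hx : 0 ≤ x) (h1 : x < 1) :
    -Real.log (1 - x) ≤ x / (1 - x) := by
  have h0 : 0 < 1 - x := by linarith
  have := Real.log_le_sub_one_of_pos (x := (1 - x)⁻¹) (by positivity)
  rw [Real.log_inv] at this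
  have : -Real.log (1 - x) ≤ (1 - x)⁻¹ - 1 := by linarith
  calc -Real.log (1 - x) ≤ (1 - x)⁻¹ - 1 := this
    _ = x / (1 - x) := by field_simp; ring

lemma summable_L {τ : ℝ} (hτ : 0 < τ) :
    Summable (fun n : ℕ => Real.log (1 - Real.exp (-Real.pi * (2 * (n : ℝ) + 1) * τ))) := by
  have hgeo : Summable (fun n : ℕ => Real.exp (-Real.pi * τ) * Real.exp (-2 * Real.pi * τ) ^ n) := by
    refine Summable.mul_left _ (summable_geometric_of_lt_one (Real.exp_nonneg _) ?_)
    exact Real.exp_lt_one_iff.2 (by nlinarith [Real.pi_pos])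
  have key : ∀ n : ℕ, Real.exp (-Real.pi * (2 * (n : ℝ) + 1) * τ)
      = Real.exp (-Real.pi * τ) * Real.exp (-2 * Real.pi * τ) ^ n := by
    intro n
    rw [← Real.exp_nat_mul, ← Real.exp_add]
    ring_nf
  set c := 1 - Real.exp (-Real.pi * τ) with hc
  have hc0 : 0 < c := by
    have := one_sub_E_pos hτ 0
    simpa [hc] using this
  refine Summable.of_norm_bounded (g := fun n => c⁻¹ * (Real.exp (-Real.pi * τ) * Real.exp (-2 * Real.pi * τ) ^ n)) (hgeo.mul_left _) ?_
  intro n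
  have hE1 : Real.exp (-Real.pi * (2 * (n : ℝ) + 1) * τ) ≤ Real.exp (-Real.pi * τ) := by
    apply Real.exp_le_exp.2
    have hpi := Real.pi_pos
    have : (0:ℝ) ≤ (n:ℝ) := Nat.cast_nonneg n
    nlinarith [mul_nonneg (mul_nonneg hpi.le this) hτ.le]
  have hEpos := Real.exp_pos (-Real.pi * (2 * (n : ℝ) + 1) * τ)
  have h1E : c ≤ 1 - Real.exp (-Real.pi * (2 * (n : ℝ) + 1) * τ) := by
    simp only [hc]; linarith
  have hlog := neg_log_one_sub_le (x := Real.exp (-Real.pi * (2 * (n : ℝ) + 1) * τ))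
    hEpos.le (E_lt_one hτ n)
  simp only [Real.norm_eq_abs]
  rw [abs_of_neg (L_neg hτ n), ← key n]
  calc -Real.log (1 - Real.exp (-Real.pi * (2 * (n : ℝ) + 1) * τ))
      ≤ Real.exp (-Real.pi * (2 * (n : ℝ) + 1) * τ) / (1 - Real.exp (-Real.pi * (2 * (n : ℝ) + 1) * τ)) := hlog
    _ ≤ Real.exp (-Real.pi * (2 * (n : ℝ) + 1) * τ) / c := by
        apply div_le_div_of_nonneg_left hEpos.le hc0 h1E
    _ = c⁻¹ * Real.exp (-Real.pi * (2 * (n : ℝ) + 1) * τ) := by ring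

lemma L_mono {a b : ℝ} (ha : 0 < a) (hab : a ≤ b) (n : ℕ) :
    Real.log (1 - Real.exp (-Real.pi * (2 * (n : ℝ) + 1) * a))
      ≤ Real.log (1 - Real.exp (-Real.pi * (2 * (n : ℝ) + 1) * b)) := by
  apply Real.log_le_log (one_sub_E_pos ha n)
  have : Real.exp (-Real.pi * (2 * (n : ℝ) + 1) * b)
      ≤ Real.exp (-Real.pi * (2 * (n : ℝ) + 1) * a) := by
    apply Real.exp_le_exp.2
    have hpi := Real.pi_pos
    have hn : (0:ℝ) ≤ 2 * (n:ℝ) + 1 := by positivity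
    nlinarith [mul_le_mul_of_nonneg_left hab (mul_nonneg hpi.le hn)]
  linarith

lemma S_mono {a b : ℝ} (ha : 0 < a) (hab : a ≤ b) :
    (∑' n : ℕ, Real.log (1 - Real.exp (-Real.pi * (2 * (n : ℝ) + 1) * a)))
      ≤ ∑' n : ℕ, Real.log (1 - Real.exp (-Real.pi * (2 * (n : ℝ) + 1) * b)) :=
  Summable.tsum_le_tsum (L_mono ha hab) (summable_L ha) (summable_L (lt_of_lt_of_le ha hab))

lemma strictAnti : StrictAntiOn fTwo (Set.Ioi (0 : ℝ)) := by
  intro a ha b hb hab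
  have hS := S_mono (Set.mem_Ioi.1 ha) hab.le
  have hpi : 0 < 1 / Real.pi := by positivity
  have := mul_le_mul_of_nonneg_left hS hpi.le
  unfold fTwo
  linarith

lemma contOn {ε : ℝ} (hε : 0 < ε) : ContinuousOn fTwo (Set.Ici ε) := by
  rw [continuousOn_iff_continuous_restrict]
  have hcS : Continuous (fun t : Set.Ici ε =>
      ∑' n : ℕ, Real.log (1 - Real.exp (-Real.pi * (2 * (n : ℝ) + 1) * (t : ℝ)))) := by
    apply continuous_tsum
      (f := fun (n : ℕ) (t : Set.Ici ε) => Real.log (1 - Real.exp (-Real.pi * (2 * (n : ℝ) + 1) * (t : ℝ))))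
      (u := fun n : ℕ => |Real.log (1 - Real.exp (-Real.pi * (2 * (n : ℝ) + 1) * ε))|)
    · intro n
      apply Continuous.log
      · exact continuous_const.sub (Real.continuous_exp.comp (continuous_const.mul continuous_subtype_val))
      · intro t
        exact ne_of_gt (one_sub_E_pos (lt_of_lt_of_le hε t.2) n)
    · exact (summable_L hε).abs
    · intro n t
      have ht : (0:ℝ) < (t:ℝ) := lt_of_lt_of_le hε t.2
      rw [Real.norm_eq_abs, abs_of_neg (L_neg ht n), abs_of_neg (L_neg hε n)]
      have := L_mono hε t.2 n
      linarith
  exact (((continuous_subtype_val.neg.div_const 24)).sub (continuous_const.mul hcS))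

lemma tendsto_zero : Filter.Tendsto fTwo (nhdsWithin 0 (Set.Ioi 0)) Filter.atTop := by
  have hbound : ∀ τ ∈ Set.Ioi (0:ℝ),
      -τ/24 - (1/Real.pi) * Real.log (1 - Real.exp (-Real.pi * τ)) ≤ fTwo τ := by
    intro τ hτ
    replace hτ : 0 < τ := hτ
    have hsum : (∑' n : ℕ, Real.log (1 - Real.exp (-Real.pi * (2 * (n : ℝ) + 1) * τ)))
        ≤ Real.log (1 - Real.exp (-Real.pi * (2 * (0 : ℝ) + 1) * τ)) := by
      have hneg : Summable (fun n : ℕ => -Real.log (1 - Real.exp (-Real.pi * (2 * (n : ℝ) + 1) * τ))) :=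
        (summable_L hτ).neg
      have hle := Summable.le_tsum hneg 0 (fun j _ => by linarith [L_neg hτ j])
      rw [tsum_neg] at hle
      push_cast at hle
      linarith
    rw [show -Real.pi * (2 * ((0:ℝ)) + 1) * τ = -Real.pi * τ by ring] at hsum
    have hpi : 0 < 1 / Real.pi := by positivity
    have := mul_le_mul_of_nonneg_left hsum hpi.le
    unfold fTwo
    linarith
  have hlow : Filter.Tendsto (fun τ => -τ/24 - (1/Real.pi) * Real.log (1 - Real.exp (-Real.pi * τ)))
      (nhdsWithin 0 (Set.Ioi 0)) Filter.atTop := by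
    have t1 : Filter.Tendsto (fun τ : ℝ => 1 - Real.exp (-Real.pi * τ))
        (nhdsWithin 0 (Set.Ioi 0)) (nhdsWithin 0 (Set.Ioi 0)) := by
      apply tendsto_nhdsWithin_of_tendsto_nhds_of_eventually_within
      · have hcont : Continuous (fun τ : ℝ => 1 - Real.exp (-Real.pi * τ)) := by
          exact continuous_const.sub (Real.continuous_exp.comp (continuous_const.mul continuous_id))
        have : Filter.Tendsto (fun τ : ℝ => 1 - Real.exp (-Real.pi * τ)) (nhds 0) (nhds 0) := by
          simpa using hcont.tendsto 0
        exact this.mono_left nhdsWithin_le_nhds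
      · filter_upwards [self_mem_nhdsWithin] with τ hτ
        have : Real.exp (-Real.pi * τ) < 1 :=
          Real.exp_lt_one_iff.2 (by nlinarith [Real.pi_pos, Set.mem_Ioi.1 hτ])
        exact Set.mem_Ioi.2 (by linarith)
    have t2 : Filter.Tendsto (fun τ : ℝ => Real.log (1 - Real.exp (-Real.pi * τ)))
        (nhdsWithin 0 (Set.Ioi 0)) Filter.atBot :=
      Real.tendsto_log_nhdsGT_zero.comp t1
    have t3 : Filter.Tendsto (fun τ : ℝ => -((1/Real.pi) * Real.log (1 - Real.exp (-Real.pi * τ))))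
        (nhdsWithin 0 (Set.Ioi 0)) Filter.atTop := by
      have := t2.const_mul_atBot (by positivity : (0:ℝ) < 1/Real.pi)
      exact tendsto_neg_atBot_atTop.comp this
    have t4 : Filter.Tendsto (fun τ : ℝ => -τ/24) (nhdsWithin 0 (Set.Ioi 0)) (nhds 0) := by
      have hcont : Continuous (fun τ : ℝ => -τ/24) := by
        exact (continuous_id.neg).div_const 24
      have := hcont.tendsto (0:ℝ)
      simp only [neg_zero, zero_div] at this
      exact this.mono_left nhdsWithin_le_nhds
    have := t4.add_atTop t3
    refine this.congr (fun τ => by ring)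
  exact Filter.tendsto_atTop_mono' _
    (Filter.eventually_iff_exists_mem.2 ⟨Set.Ioi 0, self_mem_nhdsWithin, hbound⟩) hlow

lemma tendsto_infty : Filter.Tendsto fTwo Filter.atTop Filter.atBot := by
  set C := (1/Real.pi) * ∑' n : ℕ, Real.log (1 - Real.exp (-Real.pi * (2 * (n : ℝ) + 1) * 1)) with hC
  have hb : ∀ᶠ τ in Filter.atTop, fTwo τ ≤ -τ/24 - C := by
    filter_upwards [Filter.eventually_ge_atTop (1:ℝ)] with τ hτ
    have hS := S_mono one_pos hτ
    have hpi : 0 < 1 / Real.pi := by positivity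
    have := mul_le_mul_of_nonneg_left hS hpi.le
    unfold fTwo
    simp only [hC]
    linarith
  have hlin : Filter.Tendsto (fun τ : ℝ => -τ/24 - C) Filter.atTop Filter.atBot := by
    apply Filter.tendsto_atBot_add_const_right
    exact Filter.Tendsto.atBot_div_const (by norm_num) tendsto_neg_atTop_atBot
  exact Filter.tendsto_atBot_mono' _ hb hlin

end FTwoAux

theorem fTwo_props :
    StrictAntiOn fTwo (Set.Ioi (0 : ℝ)) ∧
    Filter.Tendsto fTwo (nhdsWithin 0 (Set.Ioi 0)) Filter.atTop ∧
    Filter.Tendsto fTwo Filter.atTop Filter.atBot ∧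
    (∃! τ₀ : ℝ, 0 < τ₀ ∧ fTwo τ₀ = 0) := by
  refine ⟨FTwoAux.strictAnti, FTwoAux.tendsto_zero, FTwoAux.tendsto_infty, ?_⟩
  obtain ⟨a, ha0, hafa⟩ : ∃ a : ℝ, a ∈ Set.Ioi (0:ℝ) ∧ 0 < fTwo a := by
    have := (FTwoAux.tendsto_zero.eventually_gt_atTop 0).and self_mem_nhdsWithin
    obtain ⟨a, h1, h2⟩ := this.exists
    exact ⟨a, h2, h1⟩
  obtain ⟨b, hb0, hab⟩ : ∃ b : ℝ, fTwo b < 0 ∧ a < b := by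
    have := (FTwoAux.tendsto_infty.eventually_lt_atBot 0).and (Filter.eventually_gt_atTop a)
    exact this.exists
  replace ha0 : 0 < a := ha0
  have hcont : ContinuousOn fTwo (Set.Icc a b) :=
    (FTwoAux.contOn ha0).mono Set.Icc_subset_Ici_self
  have hIVT := intermediate_value_Icc' hab.le hcont
  have h0mem : (0:ℝ) ∈ Set.Icc (fTwo b) (fTwo a) := ⟨hb0.le, hafa.le⟩
  obtain ⟨τ₀, hτ₀mem, hτ₀⟩ := hIVT h0mem
  refine ⟨τ₀, ⟨lt_of_lt_of_le ha0 hτ₀mem.1, hτ₀⟩, ?_⟩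
  rintro y ⟨hy0, hy⟩
  have hτ₀0 : 0 < τ₀ := lt_of_lt_of_le ha0 hτ₀mem.1
  rcases lt_trichotomy y τ₀ with h | h | h
  · have := FTwoAux.strictAnti (Set.mem_Ioi.2 hy0) (Set.mem_Ioi.2 hτ₀0) h
    rw [hy, hτ₀] at this; exact absurd this (lt_irrefl 0)
  · exact h
  · have := FTwoAux.strictAnti (Set.mem_Ioi.2 hτ₀0) (Set.mem_Ioi.2 hy0) h
    rw [hy, hτ₀] at this; exact absurd this (lt_irrefl 0)
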